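/- arXiv:1605.05220 — 3 statements merged into one kernel-verified Lean document; each statement's English description precedes it below -/
import Mathlib

section
/- Let (R,m) be a Noetherian local ring and let M, N be finitely generated R-modules with m-stable filtrations {M^j} and {N^j}. Define, for each j, L^j ⊆ M ⊗_R N as the sum over j1 + j2 = j of the images of the natural maps M^{j1} ⊗_R N^{j2} → M ⊗_R N. Then {L^j}_{j∈ℕ} is an m-stable filtration of M ⊗_R N. -/
open TensorProduct

def IsMStableFiltration {R M : Type*} [CommRing R] [AddCommGroup M] [Module R M]
    (m : Ideal R) (F : ℕ → Submodule R M) : Prop :=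
  F 0 = ⊤ ∧ (∀ j, F (j + 1) ≤ F j) ∧ (∀ j, m • F j ≤ F (j + 1)) ∧
    ∃ j₀, ∀ j ≥ j₀, m • F j = F (j + 1)

lemma tmul_mem_range_map_subtype {R M N : Type*} [CommRing R] [AddCommGroup M] [Module R M]
    [AddCommGroup N] [Module R N] {A : Submodule R M} {B : Submodule R N}
    {a : M} {b : N} (ha : a ∈ A) (hb : b ∈ B) :
    a ⊗ₜ[R] b ∈ LinearMap.range (TensorProduct.map A.subtype B.subtype) :=
  ⟨(⟨a, ha⟩ : A) ⊗ₜ (⟨b, hb⟩ : B), rfl⟩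

lemma range_map_subtype_mono {R M N : Type*} [CommRing R] [AddCommGroup M] [Module R M]
    [AddCommGroup N] [Module R N] {A A' : Submodule R M} {B B' : Submodule R N}
    (hA : A ≤ A') (hB : B ≤ B') :
    LinearMap.range (TensorProduct.map A.subtype B.subtype) ≤
      LinearMap.range (TensorProduct.map A'.subtype B'.subtype) := by
  rw [TensorProduct.range_map_eq_span_tmul, TensorProduct.range_map_eq_span_tmul]
  apply Submodule.span_mono
  rintro _ ⟨a, b, rfl⟩
  exact ⟨⟨a, hA a.2⟩, ⟨b, hB b.2⟩, rfl⟩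

/-- Let `(R,m)` be Noetherian local and `M`, `N` finitely generated
`R`-modules with `m`-stable filtrations `{M^j}`, `{N^j}`.  For each `j` let
`L^j ⊆ M ⊗_R N` be the sum, over `j₁ + j₂ = j`, of the images of the natural maps
`M^{j₁} ⊗_R N^{j₂} → M ⊗_R N`.  Then `{L^j}` is an `m`-stable filtration of `M ⊗_R N`. -/
theorem tensor_filtration_isMStable (R M N : Type*) [CommRing R] [IsNoetherianRing R]
    [IsLocalRing R] [AddCommGroup M] [Module R M] [Module.Finite R M]
    [AddCommGroup N] [Module R N] [Module.Finite R N]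
    (FM : ℕ → Submodule R M) (FN : ℕ → Submodule R N)
    (hFM : IsMStableFiltration (IsLocalRing.maximalIdeal R) FM)
    (hFN : IsMStableFiltration (IsLocalRing.maximalIdeal R) FN) :
    IsMStableFiltration (IsLocalRing.maximalIdeal R)
      (fun j => ⨆ (p : ℕ × ℕ) (_ : p.1 + p.2 = j),
        LinearMap.range (TensorProduct.map (FM p.1).subtype (FN p.2).subtype)) := by
  obtain ⟨hM0, hMmono, hMsmul, jM, hMstab⟩ := hFM
  obtain ⟨hN0, hNmono, hNsmul, jN, hNstab⟩ := hFN
  set m := IsLocalRing.maximalIdeal R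
  set L : ℕ → Submodule R (M ⊗[R] N) := fun j => ⨆ (p : ℕ × ℕ) (_ : p.1 + p.2 = j),
      LinearMap.range (TensorProduct.map (FM p.1).subtype (FN p.2).subtype) with hLdef
  -- key membership lemma
  have hmem : ∀ (j p1 p2 : ℕ), p1 + p2 = j → ∀ a ∈ FM p1, ∀ b ∈ FN p2, a ⊗ₜ[R] b ∈ L j := by
    intro j p1 p2 hp a ha b hb
    refine Submodule.mem_iSup_of_mem (p1, p2) (Submodule.mem_iSup_of_mem hp ?_)
    exact tmul_mem_range_map_subtype ha hb
  -- smul containment, stated generally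
  have hsmul : ∀ j, m • L j ≤ L (j + 1) := by
    intro j
    rw [hLdef]
    simp only [Submodule.smul_iSup]
    refine iSup₂_le fun p hp => ?_
    rw [Submodule.smul_le]
    intro r hr x hx
    rw [TensorProduct.range_map_eq_span_tmul] at hx
    induction hx using Submodule.span_induction with
    | mem x h =>
      obtain ⟨a, b, rfl⟩ := h
      simp only [Submodule.coe_subtype]
      rw [TensorProduct.smul_tmul']
      exact hmem _ (p.1 + 1) p.2 (by omega)
        _ (hMsmul p.1 (Submodule.smul_mem_smul hr a.2)) _ b.2
    | zero => rw [smul_zero]; exact (L (j+1)).zero_mem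
    | add x y _ _ hx hy => rw [smul_add]; exact (L (j+1)).add_mem hx hy
    | smul s x _ hx => rw [smul_comm]; exact (L (j+1)).smul_mem s hx
  refine ⟨?_, ?_, hsmul, jM + jN, ?_⟩
  · -- L 0 = ⊤
    refine le_antisymm le_top ?_
    refine le_trans ?_ (le_iSup₂ (f := fun (p : ℕ × ℕ) (_ : p.1 + p.2 = 0) =>
      LinearMap.range (TensorProduct.map (FM p.1).subtype (FN p.2).subtype)) (0, 0) rfl)
    rw [LinearMap.range_eq_top.2]
    apply TensorProduct.map_surjective
    · rw [← LinearMap.range_eq_top, Submodule.range_subtype, hM0]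
    · rw [← LinearMap.range_eq_top, Submodule.range_subtype, hN0]
  · -- antitone
    intro j
    refine iSup₂_le fun p hp => ?_
    rcases Nat.eq_zero_or_pos p.1 with h1 | h1
    · have h2 : p.2 = j + 1 := by omega
      rw [h2]
      refine le_trans (range_map_subtype_mono le_rfl (hNmono j)) ?_
      exact le_iSup₂ (f := fun (p : ℕ × ℕ) (_ : p.1 + p.2 = j) =>
        LinearMap.range (TensorProduct.map (FM p.1).subtype (FN p.2).subtype)) (p.1, j) (by omega)
    · obtain ⟨q, hq⟩ : ∃ q, p.1 = q + 1 := ⟨p.1 - 1, by omega⟩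
      rw [hq]
      refine le_trans (range_map_subtype_mono (hMmono q) le_rfl) ?_
      exact le_iSup₂ (f := fun (p : ℕ × ℕ) (_ : p.1 + p.2 = j) =>
        LinearMap.range (TensorProduct.map (FM p.1).subtype (FN p.2).subtype)) (q, p.2) (by omega)
  · -- stability
    intro j hj
    refine le_antisymm (hsmul j) ?_
    refine iSup₂_le fun p hp => ?_
    rw [TensorProduct.range_map_eq_span_tmul, Submodule.span_le]
    rintro _ ⟨a, b, rfl⟩
    simp only [Submodule.coe_subtype, SetLike.mem_coe]
    rcases le_or_gt p.1 jM with h1 | h1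
    · -- p.2 ≥ jN + 1
      obtain ⟨q, hq⟩ : ∃ q, p.2 = q + 1 := ⟨p.2 - 1, by omega⟩
      have hb : (b : N) ∈ m • FN q := by
        rw [hNstab q (by omega)]; rw [← hq]; exact b.2
      refine Submodule.smul_induction_on hb (fun r hr n hn => ?_) (fun x y hx hy => ?_)
      · rw [TensorProduct.tmul_smul]
        exact Submodule.smul_mem_smul hr (hmem j p.1 q (by omega) _ a.2 _ hn)
      · rw [TensorProduct.tmul_add]
        exact Submodule.add_mem _ hx hy
    · obtain ⟨q, hq⟩ : ∃ q, p.1 = q + 1 := ⟨p.1 - 1, by omega⟩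
      have ha : (a : M) ∈ m • FM q := by
        rw [hMstab q (by omega)]; rw [← hq]; exact a.2
      refine Submodule.smul_induction_on ha (fun r hr x hx => ?_) (fun x y hx hy => ?_)
      · rw [← TensorProduct.smul_tmul']
        exact Submodule.smul_mem_smul hr (hmem j q p.2 (by omega) _ hx _ b.2)
      · rw [TensorProduct.add_tmul]
        exact Submodule.add_mem _ hx hy
end

section
/- Let R = k[[X,Y]] over a field k and a > 3 an integer. The ideal I = (X²−Y³, X²−Y^a) is primary to the maximal ideal m = (X,Y), and dim_k R/I = 6. -/
open MvPowerSeries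

section ColengthAux

variable (k : Type) [Field k]

private lemma colength_mem_span_pow_pow (p q : ℕ) (f : MvPowerSeries (Fin 2) k)
    (h : ∀ d : Fin 2 →₀ ℕ, d 0 < p → d 1 < q → coeff (R := k) d f = 0) :
    f ∈ Ideal.span {(X 0 : MvPowerSeries (Fin 2) k) ^ p, X 1 ^ q} := by
  classical
  set f1 : MvPowerSeries (Fin 2) k := fun d => if q ≤ d 1 then coeff (R := k) d f else 0 with hf1
  have hc1 : ∀ d, coeff (R := k) d f1 = if q ≤ d 1 then coeff (R := k) d f else 0 := fun d => rfl
  have hdvd1 : (X 1 : MvPowerSeries (Fin 2) k) ^ q ∣ f1 := by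
    rw [X_pow_dvd_iff]
    intro d hd
    rw [hc1, if_neg (by omega)]
  have hdvd0 : (X 0 : MvPowerSeries (Fin 2) k) ^ p ∣ f - f1 := by
    rw [X_pow_dvd_iff]
    intro d hd
    rw [map_sub, hc1]
    by_cases hq : q ≤ d 1
    · rw [if_pos hq, sub_self]
    · rw [if_neg hq, h d hd (by omega), sub_zero]
  obtain ⟨u, hu⟩ := hdvd0
  obtain ⟨v, hv⟩ := hdvd1
  rw [show f = (f - f1) + f1 by ring, hu, hv]
  exact Ideal.add_mem _
    (Ideal.mul_mem_right _ _ (Ideal.subset_span (by simp)))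
    (Ideal.mul_mem_right _ _ (Ideal.subset_span (by simp)))

private lemma colength_span_eq (a : ℕ) (ha : 3 < a) :
    Ideal.span {(X 0 : MvPowerSeries (Fin 2) k) ^ 2 - X 1 ^ 3,
        (X 0 : MvPowerSeries (Fin 2) k) ^ 2 - X 1 ^ a} =
    Ideal.span {(X 0 : MvPowerSeries (Fin 2) k) ^ 2, X 1 ^ 3} := by
  have hpow : (X 1 : MvPowerSeries (Fin 2) k) ^ a = X 1 ^ 3 * X 1 ^ (a - 3) := by
    rw [← pow_add]; congr 1; omega
  apply le_antisymm
  · rw [Ideal.span_le]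
    rintro x (rfl | rfl)
    · exact Ideal.sub_mem _ (Ideal.subset_span (by simp)) (Ideal.subset_span (by simp))
    · rw [hpow]
      exact Ideal.sub_mem _ (Ideal.subset_span (by simp))
        (Ideal.mul_mem_right _ _ (Ideal.subset_span (by simp)))
  · have hunit : IsUnit (1 - (X 1 : MvPowerSeries (Fin 2) k) ^ (a - 3)) := by
      rw [isUnit_iff_constantCoeff]
      rw [map_sub, map_one, map_pow, constantCoeff_X, zero_pow (by omega), sub_zero]
      exact isUnit_one
    have hY3 : (X 1 : MvPowerSeries (Fin 2) k) ^ 3 ∈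
        Ideal.span {(X 0 : MvPowerSeries (Fin 2) k) ^ 2 - X 1 ^ 3,
          (X 0 : MvPowerSeries (Fin 2) k) ^ 2 - X 1 ^ a} := by
      obtain ⟨u, hu⟩ := hunit
      have key : (X 1 : MvPowerSeries (Fin 2) k) ^ 3 * (1 - X 1 ^ (a - 3)) =
          ((X 0 : MvPowerSeries (Fin 2) k) ^ 2 - X 1 ^ a) - (X 0 ^ 2 - X 1 ^ 3) := by
        rw [hpow]; ring
      have hmem : (X 1 : MvPowerSeries (Fin 2) k) ^ 3 * (1 - X 1 ^ (a - 3)) ∈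
          Ideal.span {(X 0 : MvPowerSeries (Fin 2) k) ^ 2 - X 1 ^ 3,
            (X 0 : MvPowerSeries (Fin 2) k) ^ 2 - X 1 ^ a} := by
        rw [key]
        exact Ideal.sub_mem _ (Ideal.subset_span (by simp)) (Ideal.subset_span (by simp))
      have heq : (X 1 : MvPowerSeries (Fin 2) k) ^ 3 =
          ((X 1 : MvPowerSeries (Fin 2) k) ^ 3 * (1 - X 1 ^ (a - 3))) *
            (↑u⁻¹ : MvPowerSeries (Fin 2) k) := by
        rw [mul_assoc, ← hu, Units.mul_inv, mul_one]
      have h2 := Ideal.mul_mem_right (↑u⁻¹ : MvPowerSeries (Fin 2) k) _ hmem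
      rwa [← heq] at h2
    rw [Ideal.span_le]
    rintro x (rfl | rfl)
    · have := Ideal.add_mem _ (Ideal.subset_span
        (show (X 0:MvPowerSeries (Fin 2) k)^2 - X 1^3 ∈ _ by simp)) hY3
      simpa using this
    · exact hY3

private lemma colength_coeff_mem_span (f : MvPowerSeries (Fin 2) k)
    (hf : f ∈ Ideal.span {(X 0 : MvPowerSeries (Fin 2) k) ^ 2, X 1 ^ 3})
    (d : Fin 2 →₀ ℕ) (h0 : d 0 < 2) (h1 : d 1 < 3) : coeff (R := k) d f = 0 := by
  rw [Ideal.mem_span_pair] at hf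
  obtain ⟨p, q, rfl⟩ := hf
  have d0 : (X 0 : MvPowerSeries (Fin 2) k) ^ 2 ∣ p * X 0 ^ 2 := Dvd.intro_left p rfl
  have d1 : (X 1 : MvPowerSeries (Fin 2) k) ^ 3 ∣ q * X 1 ^ 3 := Dvd.intro_left q rfl
  rw [X_pow_dvd_iff] at d0 d1
  rw [map_add, d0 d h0, d1 d h1, add_zero]

noncomputable def colengthDD (p : Fin 2 × Fin 3) : Fin 2 →₀ ℕ :=
  Finsupp.single 0 p.1.val + Finsupp.single 1 p.2.val

private lemma colengthDD_apply0 (p : Fin 2 × Fin 3) : colengthDD p 0 = p.1.val := by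
  simp [colengthDD, Finsupp.single_apply]

private lemma colengthDD_apply1 (p : Fin 2 × Fin 3) : colengthDD p 1 = p.2.val := by
  simp [colengthDD, Finsupp.single_apply]

private lemma colengthDD_inj : Function.Injective colengthDD := by
  intro p q h
  have h0 := congrArg (fun d : Fin 2 →₀ ℕ => d 0) h
  have h1 := congrArg (fun d : Fin 2 →₀ ℕ => d 1) h
  simp only [colengthDD_apply0, colengthDD_apply1] at h0 h1
  ext <;> [exact h0; exact h1]

noncomputable def colengthPhi : MvPowerSeries (Fin 2) k →ₗ[k] (Fin 2 × Fin 3 → k) :=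
  LinearMap.pi fun p => coeff (R := k) (colengthDD p)

private lemma colength_phi_surj : Function.Surjective (colengthPhi k) := by
  intro v
  refine ⟨∑ p : Fin 2 × Fin 3, monomial (colengthDD p) (v p), ?_⟩
  funext p
  simp only [colengthPhi, LinearMap.pi_apply, map_sum]
  rw [Finset.sum_eq_single p]
  · simp [coeff_monomial_same]
  · intro q _ hq
    simp only [coeff_monomial]
    rw [if_neg (fun h => hq (colengthDD_inj h).symm)]
  · simp

private lemma colength_ker_phi :
    LinearMap.ker (colengthPhi k) =
      (Ideal.span {(X 0 : MvPowerSeries (Fin 2) k) ^ 2, X 1 ^ 3}).restrictScalars k := by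
  ext f
  simp only [LinearMap.mem_ker, Submodule.restrictScalars_mem, colengthPhi]
  constructor
  · intro h
    apply colength_mem_span_pow_pow
    intro d h0 h1
    have hd : d = colengthDD (⟨d 0, h0⟩, ⟨d 1, h1⟩) := by
      ext i
      fin_cases i
      · simp [colengthDD_apply0]
      · simp [colengthDD_apply1]
    have hc := congrFun h (⟨d 0, h0⟩, ⟨d 1, h1⟩)
    simp only [LinearMap.pi_apply, Pi.zero_apply] at hc
    rw [hd]
    exact hc
  · intro h
    funext p
    simp only [LinearMap.pi_apply, Pi.zero_apply]
    exact colength_coeff_mem_span k f h (colengthDD p)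
      (by rw [colengthDD_apply0]; exact p.1.isLt)
      (by rw [colengthDD_apply1]; exact p.2.isLt)

end ColengthAux

/-- In `R = k[[X,Y]]` with maximal ideal `m = (X,Y)`, the ideal
`I = (X² - Y³, X² - Yᵃ)` (for `a > 3`) is `m`-primary, i.e. `√I = m`, and
`dim_k R/I = 6`. -/
theorem colength_six (k : Type) [Field k] (a : ℕ) (ha : 3 < a) :
    (Ideal.span {(X 0 : MvPowerSeries (Fin 2) k) ^ 2 - X 1 ^ 3,
        (X 0 : MvPowerSeries (Fin 2) k) ^ 2 - X 1 ^ a}).radical =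
      IsLocalRing.maximalIdeal (MvPowerSeries (Fin 2) k) ∧
    Module.finrank k (MvPowerSeries (Fin 2) k ⧸
      Ideal.span {(X 0 : MvPowerSeries (Fin 2) k) ^ 2 - X 1 ^ 3,
        (X 0 : MvPowerSeries (Fin 2) k) ^ 2 - X 1 ^ a}) = 6 := by
  have hspan := colength_span_eq k a ha
  set I := Ideal.span {(X 0 : MvPowerSeries (Fin 2) k) ^ 2 - X 1 ^ 3,
        (X 0 : MvPowerSeries (Fin 2) k) ^ 2 - X 1 ^ a} with hI
  set J := Ideal.span {(X 0 : MvPowerSeries (Fin 2) k) ^ 2, X 1 ^ 3} with hJ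
  constructor
  · -- radical = maximal ideal
    rw [hspan]
    apply le_antisymm
    · have hJle : J ≤ IsLocalRing.maximalIdeal (MvPowerSeries (Fin 2) k) := by
        rw [hJ, Ideal.span_le]
        rintro x (rfl | rfl) <;>
        · rw [SetLike.mem_coe, IsLocalRing.mem_maximalIdeal, mem_nonunits_iff,
            isUnit_iff_constantCoeff]
          simp [zero_pow]
      calc J.radical ≤ (IsLocalRing.maximalIdeal (MvPowerSeries (Fin 2) k)).radical :=
            Ideal.radical_mono hJle
        _ = _ := (IsLocalRing.maximalIdeal.isMaximal _).isPrime.radical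
    · intro f hf
      rw [IsLocalRing.mem_maximalIdeal, mem_nonunits_iff, isUnit_iff_constantCoeff] at hf
      have hf0 : constantCoeff f = 0 := by
        by_contra h
        exact hf (isUnit_iff_ne_zero.mpr h)
      have hmem : f ∈ Ideal.span {(X 0 : MvPowerSeries (Fin 2) k) ^ 1, X 1 ^ 1} := by
        apply colength_mem_span_pow_pow
        intro d h0 h1
        have hd : d = 0 := by
          ext i
          fin_cases i
          · simp only [Finsupp.coe_zero, Pi.zero_apply]
            exact Nat.lt_one_iff.mp h0
          · simp only [Finsupp.coe_zero, Pi.zero_apply]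
            exact Nat.lt_one_iff.mp h1
        rw [hd]
        exact hf0
      simp only [pow_one] at hmem
      have hsub : Ideal.span {(X 0 : MvPowerSeries (Fin 2) k), X 1} ≤ J.radical := by
        rw [Ideal.span_le]
        rintro x (rfl | rfl)
        · exact ⟨2, Ideal.subset_span (by simp)⟩
        · exact ⟨3, Ideal.subset_span (by simp)⟩
      exact hsub hmem
  · -- finrank = 6
    rw [hspan]
    have hker := colength_ker_phi k
    have e1 : (MvPowerSeries (Fin 2) k ⧸ LinearMap.ker (colengthPhi k)) ≃ₗ[k]
        (Fin 2 × Fin 3 → k) :=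
      (colengthPhi k).quotKerEquivOfSurjective (colength_phi_surj k)
    rw [hker] at e1
    have e2 : (MvPowerSeries (Fin 2) k ⧸ J) ≃ₗ[k] (Fin 2 × Fin 3 → k) :=
      (Submodule.Quotient.restrictScalarsEquiv k (J : Submodule (MvPowerSeries (Fin 2) k)
        (MvPowerSeries (Fin 2) k))).symm.trans e1
    rw [e2.finrank_eq]
    simp [Module.finrank_pi]
end

section
/- Let (R,m) be a Noetherian local ring, and let F be a complex of finitely generated R-modules where each F_i carries an m-stable filtration {F_i^j} compatible with the differential. If the associated graded complex gr(F) is exact at homological position i in all internal degrees, then F is exact at position i. -/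
/-- Universe-polymorphic Krull intersection theorem, deduced from the
single-universe version in Mathlib by presenting `M` as a quotient of `Rⁿ`. -/
theorem krull_intersection_elem {R : Type*} [CommRing R] [IsNoetherianRing R]
    [IsLocalRing R] {M : Type*} [AddCommGroup M] [Module R M] [Module.Finite R M]
    (x : M) (hx : ∀ k : ℕ, x ∈ (IsLocalRing.maximalIdeal R) ^ k • (⊤ : Submodule R M)) :
    x = 0 := by
  obtain ⟨n, f, hf⟩ := Module.Finite.exists_fin' R M
  let e := f.quotKerEquivOfSurjective hf
  have hy : ∀ k : ℕ, e.symm x ∈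
      (IsLocalRing.maximalIdeal R) ^ k • (⊤ : Submodule R ((Fin n → R) ⧸ LinearMap.ker f)) := by
    intro k
    have h1 : e.symm x ∈ ((IsLocalRing.maximalIdeal R) ^ k •
        (⊤ : Submodule R M)).map (e.symm : M →ₗ[R] _) :=
      Submodule.mem_map_of_mem (hx k)
    rwa [Submodule.map_smul'', Submodule.map_top, LinearEquiv.range] at h1
  have hbot : (⨅ k : ℕ, (IsLocalRing.maximalIdeal R) ^ k •
      (⊤ : Submodule R ((Fin n → R) ⧸ LinearMap.ker f))) = ⊥ :=
    Ideal.iInf_pow_smul_eq_bot_of_isLocalRing _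
      (IsLocalRing.maximalIdeal.isMaximal R).ne_top
  have h0 : e.symm x = 0 := by
    have := Submodule.mem_iInf
      (fun k : ℕ => (IsLocalRing.maximalIdeal R) ^ k •
        (⊤ : Submodule R ((Fin n → R) ⧸ LinearMap.ker f))) (x := e.symm x)
    rw [hbot] at this
    simpa using this.mpr hy
  have := congrArg e h0
  simpa using this

/-- Let `(R,m)` be Noetherian local and let
`A --d₂--> B --d₁--> C` be (three consecutive terms of) a complex of finitely generated
`R`-modules with `m`-stable filtrations compatible with the differentials.  If the
associated graded complex is exact at the middle position in every internal degree `j`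
(every gr-cycle is a gr-boundary:
`B^j ∩ d₁⁻¹(C^{j+1}) ⊆ d₂(A^j) + B^{j+1}`), then the complex is exact at the middle
position: `ker d₁ = range d₂`. -/
theorem gr_exact_implies_exact (R A B C : Type*) [CommRing R] [IsNoetherianRing R]
    [IsLocalRing R]
    [AddCommGroup A] [Module R A] [Module.Finite R A]
    [AddCommGroup B] [Module R B] [Module.Finite R B]
    [AddCommGroup C] [Module R C] [Module.Finite R C]
    (d₂ : A →ₗ[R] B) (d₁ : B →ₗ[R] C) (hcx : d₁.comp d₂ = 0)
    (FA : ℕ → Submodule R A) (FB : ℕ → Submodule R B) (FC : ℕ → Submodule R C)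
    (hFA : IsMStableFiltration (IsLocalRing.maximalIdeal R) FA)
    (hFB : IsMStableFiltration (IsLocalRing.maximalIdeal R) FB)
    (hFC : IsMStableFiltration (IsLocalRing.maximalIdeal R) FC)
    (hd₂ : ∀ j, (FA j).map d₂ ≤ FB j) (hd₁ : ∀ j, (FB j).map d₁ ≤ FC j)
    (hgr : ∀ j, FB j ⊓ Submodule.comap d₁ (FC (j + 1)) ≤ (FA j).map d₂ ⊔ FB (j + 1)) :
    LinearMap.ker d₁ = LinearMap.range d₂ := by
  refine le_antisymm ?_ (LinearMap.range_le_ker_iff.mpr hcx)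
  intro b hb
  have hbd : d₁ b = 0 := hb
  set m := IsLocalRing.maximalIdeal R with hm
  -- Step 1: b ∈ range d₂ ⊔ FB j for all j
  have key : ∀ j, b ∈ LinearMap.range d₂ ⊔ FB j := by
    intro j
    induction j with
    | zero =>
      apply Submodule.mem_sup_right
      rw [hFB.1]; trivial
    | succ j ih =>
      obtain ⟨r, hr, f, hf, hrf⟩ := Submodule.mem_sup.mp ih
      obtain ⟨a, ha⟩ := hr
      have hdr : d₁ r = 0 := by
        rw [← ha, ← LinearMap.comp_apply, hcx, LinearMap.zero_apply]
      have hdf : d₁ f = 0 := by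
        have h0 : d₁ (r + f) = 0 := by rw [hrf]; exact hbd
        rw [map_add, hdr, zero_add] at h0
        exact h0
      have hmem : f ∈ FB j ⊓ Submodule.comap d₁ (FC (j + 1)) :=
        ⟨hf, Submodule.mem_comap.mpr (by rw [hdf]; exact (FC (j+1)).zero_mem)⟩
      have h2 : f ∈ LinearMap.range d₂ ⊔ FB (j + 1) :=
        sup_le_sup_right (LinearMap.map_le_range (f := d₂) (p := FA j)) (FB (j + 1)) (hgr j hmem)
      obtain ⟨r', hr', f', hf', hrf'⟩ := Submodule.mem_sup.mp h2
      refine Submodule.mem_sup.mpr ⟨r + r', add_mem ⟨a, ha⟩ hr', f', hf', ?_⟩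
      rw [← hrf, ← hrf', add_assoc]
  -- Step 2: FB (j₀ + k) ≤ m ^ k • ⊤
  obtain ⟨j₀, hj₀⟩ := hFB.2.2.2
  have hpow : ∀ k, FB (j₀ + k) ≤ m ^ k • (⊤ : Submodule R B) := by
    intro k
    induction k with
    | zero => simp
    | succ k ih =>
      have he : m • FB (j₀ + k) = FB (j₀ + k + 1) := hj₀ _ (Nat.le_add_right _ _)
      have : FB (j₀ + (k + 1)) = m • FB (j₀ + k) := by
        rw [he, Nat.add_assoc]
      rw [this, pow_succ', mul_smul]
      exact smul_mono_right _ ih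
  -- Step 3: Krull intersection in the quotient B ⧸ range d₂
  set N := LinearMap.range d₂ with hN
  have hq : ∀ k : ℕ, N.mkQ b ∈ m ^ k • (⊤ : Submodule R (B ⧸ N)) := by
    intro k
    obtain ⟨r, hr, f, hf, hrf⟩ := Submodule.mem_sup.mp (key (j₀ + k))
    have hr0 : N.mkQ r = 0 := by
      rw [Submodule.mkQ_apply, Submodule.Quotient.mk_eq_zero]
      exact hr
    have hb' : N.mkQ b = N.mkQ f := by
      rw [← hrf, map_add, hr0, zero_add]
    rw [hb']
    have hmap : N.mkQ f ∈ (m ^ k • (⊤ : Submodule R B)).map N.mkQ :=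
      Submodule.mem_map_of_mem (hpow k hf)
    rw [Submodule.map_smul'', Submodule.map_top, Submodule.range_mkQ] at hmap
    exact hmap
  have h0 : N.mkQ b = 0 := krull_intersection_elem _ hq
  rwa [Submodule.mkQ_apply, Submodule.Quotient.mk_eq_zero] at h0
end
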